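/- Let R be a region with variable set V_R indexed by a finite set S of vertices, and let (φ_i)_{i∈S} satisfy φ_i ≥ 0 and ∑_{i∈S} φ_i < 1. Define the clique belief b_R on {0,1}^S by b_R(x) = 1 − ∑_{i∈S} φ_i if x = 0, b_R(x) = φ_i if x = e_i (the i-th standard basis vector), and b_R(x) = 0 otherwise. Then b_R is a probability distribution on {0,1}^S, and its marginal on any subset S' ⊆ S is the clique belief on S' with the same parameters (φ_i)_{i∈S'}. -/

import Mathlib

open Finset

/-- The clique belief on `{0,1}^ι` with parameters `φ`: mass `1 - ∑ φ_i` on the all-zero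
vector, mass `φ_i` on the `i`-th standard basis vector, and zero elsewhere. -/
def cliqueBelief {ι : Type*} [Fintype ι] [DecidableEq ι] (φ : ι → ℝ) (x : ι → Bool) : ℝ :=
  if (Finset.univ.filter (fun i => x i = true)).card = 0 then 1 - ∑ i, φ i
  else if (Finset.univ.filter (fun i => x i = true)).card = 1 then
    ∑ i ∈ Finset.univ.filter (fun i => x i = true), φ i
  else 0

set_option linter.unusedSectionVars false


private def evec {α : Type*} [DecidableEq α] (i : α) : α → Bool := fun j => decide (j = i)

private lemma filt_evec {α : Type*} [Fintype α] [DecidableEq α] (i : α) :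
    (Finset.univ.filter (fun j => evec i j = true)) = {i} := by
  ext j; simp [evec]

private lemma evec_ne_false {α : Type*} [DecidableEq α] (i : α) :
    evec i ≠ (fun _ => false) := by
  intro h
  have := congrFun h i
  simp [evec] at this

private lemma sumAux {α : Type*} [Fintype α] [DecidableEq α] (ψ : α → ℝ) (A : ℝ) :
    ∑ x : α → Bool, (if (Finset.univ.filter (fun i => x i = true)).card = 0 then A
      else if (Finset.univ.filter (fun i => x i = true)).card = 1 then
        ∑ i ∈ Finset.univ.filter (fun i => x i = true), ψ i
      else 0)
    = A + ∑ i, ψ i := by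
  have key : ∀ x : α → Bool,
      (if (Finset.univ.filter (fun i => x i = true)).card = 0 then A
        else if (Finset.univ.filter (fun i => x i = true)).card = 1 then
          ∑ i ∈ Finset.univ.filter (fun i => x i = true), ψ i
        else 0)
      = (if x = (fun _ => false) then A else 0)
        + ∑ i, (if x = evec i then ψ i else 0) := by
    intro x
    by_cases h0 : (Finset.univ.filter (fun i => x i = true)).card = 0
    · have hx : x = fun _ => false := by
        rw [Finset.card_eq_zero] at h0
        funext j
        have : j ∉ Finset.univ.filter (fun i => x i = true) := by simp [h0]
        simpa using this
      rw [if_pos h0, if_pos hx]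
      have : ∀ i ∈ Finset.univ, (if x = evec i then ψ i else 0) = 0 := by
        intro i _
        rw [if_neg]
        intro h
        exact evec_ne_false i (h ▸ hx)
      rw [Finset.sum_congr rfl this]
      simp
    · by_cases h1 : (Finset.univ.filter (fun i => x i = true)).card = 1
      · obtain ⟨i0, hi0⟩ := Finset.card_eq_one.mp h1
        have hx : x = evec i0 := by
          funext j
          have hj : x j = true ↔ j = i0 := by
            constructor
            · intro h
              have : j ∈ Finset.univ.filter (fun i => x i = true) := by simp [h]
              simpa [hi0] using this
            · intro h
              have : j ∈ ({i0} : Finset α) := by simp [h]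
              rw [← hi0] at this
              simpa using this
          by_cases h : j = i0
          · subst h; simp [evec, hj.mpr rfl]
          · have : x j = false := by
              cases hxj : x j
              · rfl
              · exact absurd (hj.mp hxj) h
            simp [evec, h, this]
        rw [if_neg h0, if_pos h1, if_neg, hi0, Finset.sum_singleton]
        · rw [Finset.sum_eq_single i0]
          · rw [if_pos hx]; ring
          · intro i _ hi
            rw [if_neg]
            intro h
            apply hi
            have := congrFun (hx.symm.trans h) i
            simpa [evec] using this
          · intro h; exact absurd (Finset.mem_univ i0) h
        · intro h
          exact evec_ne_false i0 (hx.symm.trans h)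
      · rw [if_neg h0, if_neg h1]
        have h2 : ∀ i ∈ Finset.univ, (if x = evec i then ψ i else 0) = 0 := by
          intro i _
          rw [if_neg]
          intro h
          rw [h, filt_evec] at h1
          simp at h1
        rw [Finset.sum_congr rfl h2, if_neg]
        · simp
        · intro h
          rw [h] at h0
          apply h0
          rw [Finset.card_eq_zero, Finset.filter_eq_empty_iff]
          simp
  rw [Finset.sum_congr rfl (fun x _ => key x), Finset.sum_add_distrib]
  rw [Finset.sum_ite_eq' Finset.univ (fun _ => false) (fun _ => A)]
  rw [Finset.sum_comm]
  simp [Finset.sum_ite_eq']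

section Test
variable {ι κ : Type*} [Fintype ι] [Fintype κ] [DecidableEq ι] [DecidableEq κ]

private lemma card_filt_sum (y : ι → Bool) (z : κ → Bool) :
    (Finset.univ.filter (fun a : ι ⊕ κ => Sum.elim y z a = true)).card
      = (Finset.univ.filter (fun i => y i = true)).card
        + (Finset.univ.filter (fun j => z j = true)).card := by
  rw [Finset.card_filter, Finset.card_filter, Finset.card_filter, Fintype.sum_sum_type]
  rfl

private lemma sum_filt_sum (φ : ι ⊕ κ → ℝ) (y : ι → Bool) (z : κ → Bool) :
    ∑ a ∈ Finset.univ.filter (fun a : ι ⊕ κ => Sum.elim y z a = true), φ a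
      = (∑ i ∈ Finset.univ.filter (fun i => y i = true), φ (Sum.inl i))
        + ∑ j ∈ Finset.univ.filter (fun j => z j = true), φ (Sum.inr j) := by
  rw [Finset.sum_filter, Finset.sum_filter, Finset.sum_filter, Fintype.sum_sum_type]
  rfl

end Test

private lemma sum_cliqueBelief {α : Type*} [Fintype α] [DecidableEq α] (ψ : α → ℝ) :
    ∑ x : α → Bool, cliqueBelief ψ x = 1 := by
  unfold cliqueBelief
  rw [sumAux]
  ring

section Marg
variable {ι κ : Type*} [Fintype ι] [Fintype κ] [DecidableEq ι] [DecidableEq κ]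

private lemma marginal (φ : ι ⊕ κ → ℝ) (y : ι → Bool) :
    ∑ z : κ → Bool, cliqueBelief φ (Sum.elim y z) = cliqueBelief (φ ∘ Sum.inl) y := by
  by_cases h0 : (Finset.univ.filter (fun i => y i = true)).card = 0
  · have hfy : (Finset.univ.filter (fun i => y i = true)) = ∅ := Finset.card_eq_zero.mp h0
    have key : ∀ z : κ → Bool, cliqueBelief φ (Sum.elim y z)
        = (if (Finset.univ.filter (fun j => z j = true)).card = 0 then 1 - ∑ a, φ a
           else if (Finset.univ.filter (fun j => z j = true)).card = 1 then
             ∑ j ∈ Finset.univ.filter (fun j => z j = true), (fun j => φ (Sum.inr j)) j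
           else 0) := by
      intro z
      unfold cliqueBelief
      rw [card_filt_sum, sum_filt_sum, h0, hfy]
      simp
    rw [Finset.sum_congr rfl (fun z _ => key z), sumAux]
    unfold cliqueBelief
    rw [if_pos h0, Fintype.sum_sum_type]
    simp [Function.comp]
    ring
  · by_cases h1 : (Finset.univ.filter (fun i => y i = true)).card = 1
    · have key : ∀ z : κ → Bool, cliqueBelief φ (Sum.elim y z)
          = (if (Finset.univ.filter (fun j => z j = true)).card = 0 then
               ∑ i ∈ Finset.univ.filter (fun i => y i = true), φ (Sum.inl i)
             else if (Finset.univ.filter (fun j => z j = true)).card = 1 then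
               ∑ j ∈ Finset.univ.filter (fun j => z j = true), (fun _ => (0:ℝ)) j
             else 0) := by
        intro z
        unfold cliqueBelief
        rw [card_filt_sum, sum_filt_sum, h1]
        by_cases hz : (Finset.univ.filter (fun j => z j = true)).card = 0
        · have hfz : (Finset.univ.filter (fun j => z j = true)) = ∅ :=
            Finset.card_eq_zero.mp hz
          rw [hz, hfz]
          simp
        · rw [if_neg (by omega), if_neg (by omega), if_neg hz]
          simp
      rw [Finset.sum_congr rfl (fun z _ => key z), sumAux]
      unfold cliqueBelief
      rw [if_neg h0, if_pos h1]
      simp [Function.comp]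
    · have key : ∀ z : κ → Bool, cliqueBelief φ (Sum.elim y z) = 0 := by
        intro z
        unfold cliqueBelief
        rw [card_filt_sum, if_neg (by omega), if_neg (by omega)]
      rw [Finset.sum_congr rfl (fun z _ => key z)]
      unfold cliqueBelief
      rw [if_neg h0, if_neg h1]
      simp

end Marg

/-- Clique beliefs are probability distributions, and the marginal of a clique belief on a
subset of the coordinates (here: the `ι`-coordinates of `ι ⊕ κ`) is again a clique belief
with the same parameters. -/
theorem cliqueBelief_prob_and_marginal {ι κ : Type*} [Fintype ι] [Fintype κ]
    [DecidableEq ι] [DecidableEq κ] (φ : ι ⊕ κ → ℝ)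
    (hpos : ∀ i, 0 ≤ φ i) (hsum : ∑ i, φ i < 1) :
    (∀ x : ι ⊕ κ → Bool, 0 ≤ cliqueBelief φ x) ∧
      (∑ x : ι ⊕ κ → Bool, cliqueBelief φ x = 1) ∧
      (∀ y : ι → Bool,
        ∑ z : κ → Bool, cliqueBelief φ (Sum.elim y z) = cliqueBelief (φ ∘ Sum.inl) y) := by
  refine ⟨?_, ?_, fun y => marginal φ y⟩
  · intro x
    unfold cliqueBelief
    split_ifs
    · linarith
    · exact Finset.sum_nonneg (fun i _ => hpos i)
    · exact le_refl 0
  · have h := Fintype.sum_equiv (Equiv.sumArrowEquivProdArrow ι κ Bool) (cliqueBelief φ)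
      (fun p => cliqueBelief φ (Sum.elim p.1 p.2)) ?_
    · rw [h, Fintype.sum_prod_type]
      rw [Finset.sum_congr rfl (fun y _ => marginal φ y)]
      exact sum_cliqueBelief _
    · intro x
      congr 1
      funext a
      cases a <;> simp [Equiv.sumArrowEquivProdArrow]
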